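/- Let M ⊆ [0,∞] be a closed nonempty subset of the extended nonnegative reals, and define G_M(x) = max{sup([0,x] ∩ M), inf([x,∞] ∩ M)} ∩ M as the larger of the two nearest points of M below/above x that belong to M. Then G_M is non-decreasing on [0,∞]. -/

import Mathlib

open Set ENNReal

/-- Pseudo-inverse of `f : [0,1] → [0,∞]`: `f⁻(y) = sup {x ∈ [0,1] | f x < y}` (with `sup ∅ = 0`). -/
noncomputable def pinv (f : unitInterval → ℝ≥0∞) (y : ℝ≥0∞) : unitInterval :=
  ⟨sSup {x : ℝ | ∃ hx : x ∈ unitInterval, f ⟨x, hx⟩ < y}, by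
    set A : Set ℝ := {x : ℝ | ∃ hx : x ∈ unitInterval, f ⟨x, hx⟩ < y} with hA
    have hsub : A ⊆ Set.Icc (0:ℝ) 1 := fun x hx => hx.choose
    rcases A.eq_empty_or_nonempty with h | h
    · rw [h, Real.sSup_empty]; exact ⟨le_refl 0, zero_le_one⟩
    · obtain ⟨a, ha⟩ := h
      exact ⟨le_trans (hsub ha).1 (le_csSup ⟨1, fun z hz => (hsub hz).2⟩ ha),
        csSup_le ⟨a, ha⟩ fun z hz => (hsub hz).2⟩⟩

/-- `G_M(x) = max (M ∩ {sup([0,x]∩M), inf([x,∞]∩M)})`. -/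
noncomputable def GM (M : Set ℝ≥0∞) (x : ℝ≥0∞) : ℝ≥0∞ :=
  sSup (M ∩ {sSup (M ∩ Set.Iic x), sInf (M ∩ Set.Ici x)})

/-- Right limit `f(x⁺)`, with convention `f(1⁺) = ∞`. -/
noncomputable def rlim (f : unitInterval → ℝ≥0∞) (x : unitInterval) : ℝ≥0∞ :=
  if (x : ℝ) = 1 then ⊤ else sInf {z | ∃ t : unitInterval, x < t ∧ f t = z}

/-- The defining condition of the class `𝓕`. -/
def ClassF (f : unitInterval → ℝ≥0∞) : Prop :=
  ∀ x : unitInterval,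
    (rlim f x ∈ Set.range f → f x = rlim f x) ∧
    (rlim f x ∉ Set.range f → ∀ y : unitInterval, y ≠ x → f y ≠ f x)

theorem stmt3 (M : Set ℝ≥0∞) (hM : M.Nonempty) (hMc : IsClosed M)
    (h : ∀ x : ℝ≥0∞, sSup (M ∩ Set.Iic x) ∈ M ∨ sInf (M ∩ Set.Ici x) ∈ M) :
    Monotone (GM M) := by
  intro x y hxy
  unfold GM
  by_cases hiy : sInf (M ∩ Set.Ici y) ∈ M
  · -- GM x ≤ i(x) ≤ i(y) ≤ GM y
    have h1 : sSup (M ∩ ({sSup (M ∩ Set.Iic x), sInf (M ∩ Set.Ici x)} : Set ℝ≥0∞))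
        ≤ sInf (M ∩ Set.Ici x) := by
      apply sSup_le
      rintro z ⟨hzM, hz⟩
      rcases hz with hz | hz
      · subst hz
        calc sSup (M ∩ Set.Iic x) ≤ x := sSup_le fun w hw => hw.2
          _ ≤ sInf (M ∩ Set.Ici x) := le_sInf fun w hw => hw.2
      · simp only [Set.mem_singleton_iff] at hz; subst hz; exact le_rfl
    have h2 : sInf (M ∩ Set.Ici x) ≤ sInf (M ∩ Set.Ici y) :=
      sInf_le_sInf (Set.inter_subset_inter_right M (Set.Ici_subset_Ici.mpr hxy))
    have h3 : sInf (M ∩ Set.Ici y)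
        ≤ sSup (M ∩ ({sSup (M ∩ Set.Iic y), sInf (M ∩ Set.Ici y)} : Set ℝ≥0∞)) :=
      le_sSup ⟨hiy, Or.inr rfl⟩
    exact le_trans h1 (le_trans h2 h3)
  · -- M ∩ Ici y = ∅, so M ⊆ Iic y and sSup M = s(y) ∈ M
    have hempty : M ∩ Set.Ici y = ∅ := by
      by_contra hne
      exact hiy (hMc.inter isClosed_Ici |>.sInf_mem
        (Set.nonempty_iff_ne_empty.mpr hne)).1
    have hsub : M ⊆ Set.Iic y := by
      intro m hm
      by_contra hlt
      have : m ∈ M ∩ Set.Ici y := ⟨hm, (le_of_not_ge hlt : y ≤ m)⟩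
      simp [hempty] at this
    have hMeq : M ∩ Set.Iic y = M := Set.inter_eq_left.mpr hsub
    have hsM : sSup M ∈ M := hMc.sSup_mem hM
    have h1 : sSup (M ∩ ({sSup (M ∩ Set.Iic x), sInf (M ∩ Set.Ici x)} : Set ℝ≥0∞))
        ≤ sSup M := sSup_le fun z hz => le_sSup hz.1
    have h3 : sSup M
        ≤ sSup (M ∩ ({sSup (M ∩ Set.Iic y), sInf (M ∩ Set.Ici y)} : Set ℝ≥0∞)) := by
      apply le_sSup
      refine ⟨hsM, Or.inl ?_⟩
      rw [hMeq]
    exact le_trans h1 h3
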